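/- Let n ≥ 2 and m ≥ 0 be integers. The family of bracket monomials p_{i₁j₁}⋯p_{i_mj_m}, indexed by the Rumer diagrams on n vertices with m edges (i.e., by the multisets {(i₁,j₁),…,(i_m,j_m)} of m pairs with 1 ≤ i_s < j_s ≤ n having no two crossing edges), is a basis of the ℂ-linear span of all bracket monomials of degree m in ℂ[x₁⁽¹⁾, x₂⁽¹⁾, …, x₁⁽ⁿ⁾, x₂⁽ⁿ⁾]; in particular these bracket monomials are linearly independent over ℂ. -/

import Mathlib

open MvPolynomial

/-- Two chords `(i,j)` and `(k,l)` (with `i < j`, `k < l`) of a circle with `n` marked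
points cross iff `i < k < j < l` or `k < i < l < j`. -/
def Crosses {n : ℕ} (e f : Fin n × Fin n) : Prop :=
  (e.1 < f.1 ∧ f.1 < e.2 ∧ e.2 < f.2) ∨ (f.1 < e.1 ∧ e.1 < f.2 ∧ f.2 < e.2)

/-- The bracket `p_{ab} = x₁⁽ᵃ⁾x₂⁽ᵇ⁾ − x₂⁽ᵃ⁾x₁⁽ᵇ⁾` in the polynomial ring
`ℂ[x₁⁽¹⁾, x₂⁽¹⁾, …, x₁⁽ⁿ⁾, x₂⁽ⁿ⁾]`. -/
noncomputable def bracket (n : ℕ) (a b : Fin n) : MvPolynomial (Fin n × Fin 2) ℂ :=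
  X (a, 0) * X (b, 1) - X (a, 1) * X (b, 0)

/-- The bracket monomial `p_{i₁j₁}⋯p_{i_mj_m}` whose valence scheme is the multiset `E`
of edges `(i₁,j₁),…,(i_m,j_m)`. -/
noncomputable def bracketMonomial (n : ℕ) (E : Multiset (Fin n × Fin n)) :
    MvPolynomial (Fin n × Fin 2) ℂ :=
  (E.map fun e => bracket n e.1 e.2).prod

section Aux
variable {n : ℕ}

noncomputable def edgeWt (e : Fin n × Fin n) : (Fin n × Fin 2) →₀ ℕ :=
  Finsupp.single (e.1, 0) 1 + Finsupp.single (e.2, 1) 1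

noncomputable def DE (E : Multiset (Fin n × Fin n)) : (Fin n × Fin 2) →₀ ℕ :=
  (E.map edgeWt).sum

lemma DE_zero : DE (0 : Multiset (Fin n × Fin n)) = 0 := by simp [DE]

lemma DE_cons (e : Fin n × Fin n) (E : Multiset (Fin n × Fin n)) :
    DE (e ::ₘ E) = edgeWt e + DE E := by simp [DE]

def wt (σ : (Fin n × Fin 2) →₀ ℕ) : ℕ := ∑ i : Fin n, σ (i, 1) * i.val

lemma wt_add (a b : (Fin n × Fin 2) →₀ ℕ) : wt (a + b) = wt a + wt b := by
  simp [wt, add_mul, Finset.sum_add_distrib]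

lemma wt_single_one (x : Fin n) : wt (Finsupp.single (x, (1 : Fin 2)) 1) = x.val := by
  simp [wt, Finsupp.single_apply, Prod.ext_iff]

lemma wt_single_zero (x : Fin n) : wt (Finsupp.single (x, (0 : Fin 2)) 1) = 0 := by
  simp [wt, Finsupp.single_apply, Prod.ext_iff]

lemma wt_edgeWt (e : Fin n × Fin n) : wt (edgeWt e) = e.2.val := by
  rw [edgeWt, wt_add, wt_single_zero, wt_single_one, zero_add]

def Good (P : MvPolynomial (Fin n × Fin 2) ℂ) (d : (Fin n × Fin 2) →₀ ℕ) : Prop :=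
  coeff d P = 1 ∧ ∀ σ, coeff σ P ≠ 0 → wt σ ≤ wt d ∧ (wt σ = wt d → σ = d)

lemma good_one : Good (1 : MvPolynomial (Fin n × Fin 2) ℂ) 0 := by
  constructor
  · simp
  · intro σ hσ
    have : σ = 0 := by
      by_contra hne
      rw [coeff_one, if_neg (fun h => hne h.symm)] at hσ
      exact hσ rfl
    subst this
    exact ⟨le_rfl, fun _ => rfl⟩

lemma Good.mul {P Q : MvPolynomial (Fin n × Fin 2) ℂ} {d₁ d₂ : (Fin n × Fin 2) →₀ ℕ}
    (hP : Good P d₁) (hQ : Good Q d₂) : Good (P * Q) (d₁ + d₂) := by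
  constructor
  · rw [coeff_mul, Finset.sum_eq_single_of_mem (d₁, d₂) (Finset.HasAntidiagonal.mem_antidiagonal.2 rfl)]
    · rw [hP.1, hQ.1, one_mul]
    · intro x hab hne
      rw [Finset.HasAntidiagonal.mem_antidiagonal] at hab
      by_cases ha : coeff x.1 P = 0
      · simp [ha]
      by_cases hb : coeff x.2 Q = 0
      · simp [hb]
      obtain ⟨h1, h1'⟩ := hP.2 x.1 ha
      obtain ⟨h2, h2'⟩ := hQ.2 x.2 hb
      have hw : wt x.1 + wt x.2 = wt d₁ + wt d₂ := by rw [← wt_add, ← wt_add, hab]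
      exact ((hne (Prod.ext (h1' (by omega)) (h2' (by omega)))).elim : _)
  · intro σ hσ
    rw [coeff_mul] at hσ
    obtain ⟨x, hab, hne⟩ := Finset.exists_ne_zero_of_sum_ne_zero hσ
    rw [Finset.HasAntidiagonal.mem_antidiagonal] at hab
    have ha : coeff x.1 P ≠ 0 := fun h => hne (by simp [h])
    have hb : coeff x.2 Q ≠ 0 := fun h => hne (by simp [h])
    obtain ⟨h1, h1'⟩ := hP.2 x.1 ha
    obtain ⟨h2, h2'⟩ := hQ.2 x.2 hb
    subst hab
    rw [wt_add, wt_add]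
    refine ⟨by omega, fun he => by rw [h1' (by omega), h2' (by omega)]⟩

lemma good_bracket {a b : Fin n} (h : a < b) :
    Good (bracket n a b) (edgeWt (a, b)) := by
  have hX1 : X (a, (0 : Fin 2)) * X (b, (1 : Fin 2)) = monomial (edgeWt (a, b)) (1 : ℂ) := by
    rw [X, X, monomial_mul, one_mul]; rfl
  set e2 : (Fin n × Fin 2) →₀ ℕ :=
    Finsupp.single (a, (1 : Fin 2)) 1 + Finsupp.single (b, (0 : Fin 2)) 1 with he2
  have hX2 : X (a, (1 : Fin 2)) * X (b, (0 : Fin 2)) = monomial e2 (1 : ℂ) := by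
    rw [X, X, monomial_mul, one_mul]
  have hB : bracket n a b = monomial (edgeWt (a, b)) 1 - monomial e2 1 := by
    rw [bracket, hX1, hX2]
  have hne : edgeWt (a, b) ≠ e2 := by
    intro hEq
    have := DFunLike.congr_fun hEq (a, (0 : Fin 2))
    simp [edgeWt, he2, Finsupp.single_apply, Prod.ext_iff, h.ne, h.ne'] at this
  have hw2 : wt e2 = a.val := by
    rw [he2, wt_add, wt_single_one, wt_single_zero, add_zero]
  have hab : a.val < b.val := h
  constructor
  · rw [hB, coeff_sub, coeff_monomial, coeff_monomial, if_pos rfl, if_neg (Ne.symm hne), sub_zero]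
  · intro σ hσ
    rw [hB, coeff_sub, coeff_monomial, coeff_monomial] at hσ
    by_cases h1 : edgeWt (a, b) = σ
    · subst h1
      exact ⟨le_rfl, fun _ => rfl⟩
    · have h2 : e2 = σ := by
        by_contra h2
        rw [if_neg h1, if_neg h2, sub_zero] at hσ
        exact hσ rfl
      subst h2
      have hwe : wt (edgeWt (a, b)) = b.val := wt_edgeWt (a, b)
      rw [hwe, hw2]
      exact ⟨le_of_lt hab, fun hEq => absurd hEq (Nat.ne_of_lt hab)⟩

lemma good_bracketMonomial (E : Multiset (Fin n × Fin n)) :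
    (∀ e ∈ E, e.1 < e.2) → Good (bracketMonomial n E) (DE E) := by
  induction E using Multiset.induction with
  | empty => intro _; simpa [bracketMonomial, DE] using (good_one (n := n))
  | cons e E ih =>
    intro hinc
    have h1 : Good (bracket n e.1 e.2) (edgeWt e) :=
      good_bracket (hinc e (Multiset.mem_cons_self e E))
    have h2 := ih (fun f hf => hinc f (Multiset.mem_cons_of_mem hf))
    have := h1.mul h2
    simpa [bracketMonomial, DE_cons, Multiset.map_cons, Multiset.prod_cons] using this

end Aux

section Uniq
variable {n : ℕ}

lemma DE_pos_left {E : Multiset (Fin n × Fin n)} {e : Fin n × Fin n} (he : e ∈ E) :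
    0 < DE E (e.1, (0 : Fin 2)) := by
  rw [← Multiset.cons_erase he, DE_cons, Finsupp.add_apply]
  have : edgeWt e (e.1, (0 : Fin 2)) = 1 := by
    simp [edgeWt, Finsupp.single_apply, Prod.ext_iff]
  omega

lemma DE_pos_right {E : Multiset (Fin n × Fin n)} {e : Fin n × Fin n} (he : e ∈ E) :
    0 < DE E (e.2, (1 : Fin 2)) := by
  rw [← Multiset.cons_erase he, DE_cons, Finsupp.add_apply]
  have : edgeWt e (e.2, (1 : Fin 2)) = 1 := by
    simp [edgeWt, Finsupp.single_apply, Prod.ext_iff]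
  omega

lemma exists_left_of_pos {i : Fin n} :
    ∀ {E : Multiset (Fin n × Fin n)}, 0 < DE E (i, (0 : Fin 2)) → ∃ e ∈ E, e.1 = i := by
  intro E
  induction E using Multiset.induction with
  | empty => intro h; simp [DE] at h
  | cons e E ih =>
    intro h
    rw [DE_cons, Finsupp.add_apply] at h
    by_cases h2 : 0 < DE E (i, (0 : Fin 2))
    · obtain ⟨f, hf, hf1⟩ := ih h2
      exact ⟨f, Multiset.mem_cons_of_mem hf, hf1⟩
    · have hpos : 0 < edgeWt e (i, (0 : Fin 2)) := by omega
      have : e.1 = i := by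
        by_contra hne
        simp [edgeWt, Finsupp.single_apply, Prod.ext_iff, hne] at hpos
      exact ⟨e, Multiset.mem_cons_self e E, this⟩

lemma exists_right_of_pos {j : Fin n} :
    ∀ {E : Multiset (Fin n × Fin n)}, 0 < DE E (j, (1 : Fin 2)) → ∃ e ∈ E, e.2 = j := by
  intro E
  induction E using Multiset.induction with
  | empty => intro h; simp [DE] at h
  | cons e E ih =>
    intro h
    rw [DE_cons, Finsupp.add_apply] at h
    by_cases h2 : 0 < DE E (j, (1 : Fin 2))
    · obtain ⟨f, hf, hf1⟩ := ih h2
      exact ⟨f, Multiset.mem_cons_of_mem hf, hf1⟩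
    · have hpos : 0 < edgeWt e (j, (1 : Fin 2)) := by omega
      have : e.2 = j := by
        by_contra hne
        simp [edgeWt, Finsupp.single_apply, Prod.ext_iff, hne] at hpos
      exact ⟨e, Multiset.mem_cons_self e E, this⟩

lemma mem_of_extremal {E : Multiset (Fin n × Fin n)}
    (hinc : ∀ e ∈ E, e.1 < e.2) (hcr : ∀ e ∈ E, ∀ f ∈ E, ¬ Crosses e f)
    {i j : Fin n}
    (hi0 : 0 < DE E (i, (0 : Fin 2)))
    (himax : ∀ i', 0 < DE E (i', (0 : Fin 2)) → i' ≤ i)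
    (hij : i < j) (hj1 : 0 < DE E (j, (1 : Fin 2)))
    (hjmin : ∀ j', i < j' → 0 < DE E (j', (1 : Fin 2)) → j ≤ j') :
    (i, j) ∈ E := by
  obtain ⟨e, heE, he1⟩ := exists_left_of_pos hi0
  obtain ⟨f, hfE, hf2⟩ := exists_right_of_pos hj1
  by_cases hcase : e.2 = j
  · have : e = (i, j) := Prod.ext he1 hcase
    rwa [← this]
  · have he2 : i < e.2 := he1 ▸ hinc e heE
    have hle : j ≤ e.2 := hjmin e.2 he2 (DE_pos_right heE)
    have hjlt : j < e.2 := lt_of_le_of_ne hle (Ne.symm hcase)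
    by_cases hf1 : f.1 = i
    · have : f = (i, j) := Prod.ext hf1 hf2
      rwa [← this]
    · have hle' : f.1 ≤ i := himax f.1 (DE_pos_left hfE)
      have hf1i : f.1 < i := lt_of_le_of_ne hle' hf1
      exact absurd (Or.inr (by rw [he1, hf2]; exact ⟨hf1i, hij, hjlt⟩)) (hcr e heE f hfE)

lemma DE_injective :
    ∀ (k : ℕ) (E F : Multiset (Fin n × Fin n)),
    Multiset.card E = k →
    (∀ e ∈ E, e.1 < e.2) → (∀ e ∈ E, ∀ f ∈ E, ¬ Crosses e f) →
    (∀ e ∈ F, e.1 < e.2) → (∀ e ∈ F, ∀ f ∈ F, ¬ Crosses e f) →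
    DE E = DE F → E = F := by
  intro k
  induction k with
  | zero =>
    intro E F hcard _ _ _ _ hDE
    have hE : E = 0 := Multiset.card_eq_zero.mp hcard
    subst hE
    by_contra hne
    have hF : F ≠ 0 := fun h => hne (by rw [h])
    obtain ⟨f, hf⟩ := Multiset.exists_mem_of_ne_zero hF
    have hpos := DE_pos_left hf
    rw [← hDE] at hpos
    simp [DE] at hpos
  | succ k ih =>
    intro E F hcard hE1 hE2 hF1 hF2 hDE
    have hE0 : E ≠ 0 := by
      intro h; rw [h] at hcard; simp at hcard
    obtain ⟨e0, he0⟩ := Multiset.exists_mem_of_ne_zero hE0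
    have hsne : (Finset.univ.filter (fun i : Fin n => 0 < DE E (i, (0 : Fin 2)))).Nonempty :=
      ⟨e0.1, Finset.mem_filter.2 ⟨Finset.mem_univ _, DE_pos_left he0⟩⟩
    set i := (Finset.univ.filter (fun i : Fin n => 0 < DE E (i, (0 : Fin 2)))).max' hsne with hidef
    have hi0 : 0 < DE E (i, (0 : Fin 2)) :=
      (Finset.mem_filter.1 (Finset.max'_mem _ hsne)).2
    have himax : ∀ i', 0 < DE E (i', (0 : Fin 2)) → i' ≤ i := fun i' h' =>
      Finset.le_max' (Finset.univ.filter (fun i : Fin n => 0 < DE E (i, (0 : Fin 2)))) i'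
        (Finset.mem_filter.2 ⟨Finset.mem_univ _, h'⟩)
    obtain ⟨e1, he1E, he1⟩ := exists_left_of_pos hi0
    have htne : (Finset.univ.filter
        (fun j : Fin n => i < j ∧ 0 < DE E (j, (1 : Fin 2)))).Nonempty :=
      ⟨e1.2, Finset.mem_filter.2 ⟨Finset.mem_univ _,
        he1 ▸ hE1 e1 he1E, DE_pos_right he1E⟩⟩
    set j := (Finset.univ.filter
        (fun j : Fin n => i < j ∧ 0 < DE E (j, (1 : Fin 2)))).min' htne with hjdef
    have hjmem := Finset.mem_filter.1 (Finset.min'_mem _ htne)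
    have hij : i < j := hjmem.2.1
    have hj1 : 0 < DE E (j, (1 : Fin 2)) := hjmem.2.2
    have hjmin : ∀ j', i < j' → 0 < DE E (j', (1 : Fin 2)) → j ≤ j' := fun j' h1 h2 =>
      Finset.min'_le (Finset.univ.filter
        (fun j : Fin n => i < j ∧ 0 < DE E (j, (1 : Fin 2)))) j'
        (Finset.mem_filter.2 ⟨Finset.mem_univ _, h1, h2⟩)
    have hEij : (i, j) ∈ E := mem_of_extremal hE1 hE2 hi0 himax hij hj1 hjmin
    have hFij : (i, j) ∈ F := by
      refine mem_of_extremal hF1 hF2 ?_ ?_ hij ?_ ?_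
      · rw [← hDE]; exact hi0
      · intro i' h'; rw [← hDE] at h'; exact himax i' h'
      · rw [← hDE]; exact hj1
      · intro j' h1 h2; rw [← hDE] at h2; exact hjmin j' h1 h2
    have hEeq : (i, j) ::ₘ E.erase (i, j) = E := Multiset.cons_erase hEij
    have hFeq : (i, j) ::ₘ F.erase (i, j) = F := Multiset.cons_erase hFij
    have hDE' : DE (E.erase (i, j)) = DE (F.erase (i, j)) := by
      have h1 : DE E = edgeWt (i, j) + DE (E.erase (i, j)) := by
        conv_lhs => rw [← hEeq]
        rw [DE_cons]
      have h2 : DE F = edgeWt (i, j) + DE (F.erase (i, j)) := by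
        conv_lhs => rw [← hFeq]
        rw [DE_cons]
      ext x
      have := DFunLike.congr_fun (h1 ▸ h2 ▸ hDE) x
      simp only [Finsupp.add_apply] at this
      omega
    have hcard' : Multiset.card (E.erase (i, j)) = k := by
      rw [Multiset.card_erase_of_mem hEij, hcard]; rfl
    have hrec : E.erase (i, j) = F.erase (i, j) :=
      ih (E.erase (i, j)) (F.erase (i, j)) hcard'
        (fun e he => hE1 e (Multiset.mem_of_mem_erase he))
        (fun e he f hf => hE2 e (Multiset.mem_of_mem_erase he) f (Multiset.mem_of_mem_erase hf))
        (fun e he => hF1 e (Multiset.mem_of_mem_erase he))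
        (fun e he f hf => hF2 e (Multiset.mem_of_mem_erase he) f (Multiset.mem_of_mem_erase hf))
        hDE'
    rw [← hEeq, ← hFeq, hrec]

end Uniq

/-- The Rumer diagrams on `n` vertices with `m` edges. -/
def RumerDiagram (n m : ℕ) : Type :=
  {E : Multiset (Fin n × Fin n) // Multiset.card E = m ∧ (∀ e ∈ E, e.1 < e.2) ∧
    ∀ e ∈ E, ∀ f ∈ E, ¬ Crosses e f}

section Span
variable {n : ℕ}

def lenSum (E : Multiset (Fin n × Fin n)) : ℕ := (E.map fun e => e.2.val - e.1.val).sum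
def sqSum (E : Multiset (Fin n × Fin n)) : ℕ := (E.map fun e => (e.2.val - e.1.val) ^ 2).sum

def mu (E : Multiset (Fin n × Fin n)) : ℕ :=
  lenSum E * (Multiset.card E * n ^ 2 + 1) + (Multiset.card E * n ^ 2 - sqSum E)

lemma lenSum_cons (a : Fin n × Fin n) (E : Multiset (Fin n × Fin n)) :
    lenSum (a ::ₘ E) = (a.2.val - a.1.val) + lenSum E := by simp [lenSum]

lemma sqSum_cons (a : Fin n × Fin n) (E : Multiset (Fin n × Fin n)) :
    sqSum (a ::ₘ E) = (a.2.val - a.1.val) ^ 2 + sqSum E := by simp [sqSum]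

lemma sqSum_le (E : Multiset (Fin n × Fin n)) : sqSum E ≤ Multiset.card E * n ^ 2 := by
  have h := Multiset.sum_le_card_nsmul (E.map fun e => (e.2.val - e.1.val) ^ 2) (n ^ 2)
    (by
      intro x hx
      obtain ⟨e, _, rfl⟩ := Multiset.mem_map.1 hx
      have : e.2.val - e.1.val ≤ n := le_trans (Nat.sub_le _ _) (le_of_lt e.2.isLt)
      exact Nat.pow_le_pow_left this 2)
  simpa [sqSum, Multiset.card_map, smul_eq_mul] using h

lemma pluecker (i j k l : Fin n) :
    bracket n i k * bracket n j l =
      bracket n i j * bracket n k l + bracket n i l * bracket n j k := by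
  simp only [bracket]; ring

lemma bracketMonomial_cons (e : Fin n × Fin n) (E : Multiset (Fin n × Fin n)) :
    bracketMonomial n (e ::ₘ E) = bracket n e.1 e.2 * bracketMonomial n E := by
  simp [bracketMonomial]

lemma mu_lt₁ {i j k l : Fin n} (R : Multiset (Fin n × Fin n))
    (h1 : i < j) (h2 : j < k) (h3 : k < l) :
    mu ((i, j) ::ₘ (k, l) ::ₘ R) < mu ((i, k) ::ₘ (j, l) ::ₘ R) := by
  have hi : i.val < j.val := h1
  have hj : j.val < k.val := h2
  have hk : k.val < l.val := h3
  have hQ1 : sqSum ((i, j) ::ₘ (k, l) ::ₘ R) ≤ (Multiset.card R + 2) * n ^ 2 := by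
    have := sqSum_le ((i, j) ::ₘ (k, l) ::ₘ R)
    simpa [Multiset.card_cons] using this
  set c := Multiset.card R with hc
  set K := (c + 2) * n ^ 2 + 1 with hK
  set B := (c + 2) * n ^ 2 with hB
  have hBK : B < K := by omega
  have hL : lenSum ((i, j) ::ₘ (k, l) ::ₘ R) + 1 ≤ lenSum ((i, k) ::ₘ (j, l) ::ₘ R) := by
    rw [lenSum_cons, lenSum_cons, lenSum_cons, lenSum_cons]
    simp only
    omega
  have e1 : mu ((i, j) ::ₘ (k, l) ::ₘ R) =
      lenSum ((i, j) ::ₘ (k, l) ::ₘ R) * K + (B - sqSum ((i, j) ::ₘ (k, l) ::ₘ R)) := by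
    rw [mu]; simp only [Multiset.card_cons]; rfl
  have e2 : mu ((i, k) ::ₘ (j, l) ::ₘ R) =
      lenSum ((i, k) ::ₘ (j, l) ::ₘ R) * K + (B - sqSum ((i, k) ::ₘ (j, l) ::ₘ R)) := by
    rw [mu]; simp only [Multiset.card_cons]; rfl
  rw [e1, e2]
  calc lenSum ((i, j) ::ₘ (k, l) ::ₘ R) * K + (B - sqSum ((i, j) ::ₘ (k, l) ::ₘ R))
      ≤ lenSum ((i, j) ::ₘ (k, l) ::ₘ R) * K + B := by omega
    _ < (lenSum ((i, j) ::ₘ (k, l) ::ₘ R) + 1) * K := by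
        rw [add_mul, one_mul]; omega
    _ ≤ lenSum ((i, k) ::ₘ (j, l) ::ₘ R) * K := Nat.mul_le_mul_right K hL
    _ ≤ _ := Nat.le_add_right _ _

lemma mu_lt₂ {i j k l : Fin n} (R : Multiset (Fin n × Fin n))
    (h1 : i < j) (h2 : j < k) (h3 : k < l) :
    mu ((i, l) ::ₘ (j, k) ::ₘ R) < mu ((i, k) ::ₘ (j, l) ::ₘ R) := by
  have hi : i.val < j.val := h1
  have hj : j.val < k.val := h2
  have hk : k.val < l.val := h3
  have hQ2 : sqSum ((i, l) ::ₘ (j, k) ::ₘ R) ≤ (Multiset.card R + 2) * n ^ 2 := by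
    have := sqSum_le ((i, l) ::ₘ (j, k) ::ₘ R)
    simpa [Multiset.card_cons] using this
  set c := Multiset.card R with hc
  set K := (c + 2) * n ^ 2 + 1 with hK
  set B := (c + 2) * n ^ 2 with hB
  have e1 : mu ((i, l) ::ₘ (j, k) ::ₘ R) =
      lenSum ((i, l) ::ₘ (j, k) ::ₘ R) * K + (B - sqSum ((i, l) ::ₘ (j, k) ::ₘ R)) := by
    rw [mu]; simp only [Multiset.card_cons]; rfl
  have e2 : mu ((i, k) ::ₘ (j, l) ::ₘ R) =
      lenSum ((i, k) ::ₘ (j, l) ::ₘ R) * K + (B - sqSum ((i, k) ::ₘ (j, l) ::ₘ R)) := by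
    rw [mu]; simp only [Multiset.card_cons]; rfl
  have hLeq : lenSum ((i, l) ::ₘ (j, k) ::ₘ R) = lenSum ((i, k) ::ₘ (j, l) ::ₘ R) := by
    rw [lenSum_cons, lenSum_cons, lenSum_cons, lenSum_cons]
    simp only
    omega
  have hQlt : sqSum ((i, k) ::ₘ (j, l) ::ₘ R) < sqSum ((i, l) ::ₘ (j, k) ::ₘ R) := by
    rw [sqSum_cons, sqSum_cons, sqSum_cons, sqSum_cons]
    simp only
    have key : (k.val - i.val) ^ 2 + (l.val - j.val) ^ 2
        < (l.val - i.val) ^ 2 + (k.val - j.val) ^ 2 := by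
      obtain ⟨p, hp⟩ : ∃ p, j.val = i.val + p + 1 := ⟨j.val - i.val - 1, by omega⟩
      obtain ⟨q, hq⟩ : ∃ q, k.val = j.val + q + 1 := ⟨k.val - j.val - 1, by omega⟩
      obtain ⟨r, hr⟩ : ∃ r, l.val = k.val + r + 1 := ⟨l.val - k.val - 1, by omega⟩
      have ea : k.val - i.val = p + q + 2 := by omega
      have eb : l.val - j.val = q + r + 2 := by omega
      have ec : l.val - i.val = p + q + r + 3 := by omega
      have ed : k.val - j.val = q + 1 := by omega
      rw [ea, eb, ec, ed]
      nlinarith [Nat.zero_le p, Nat.zero_le r]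
    omega
  rw [e1, e2, hLeq]
  have : B - sqSum ((i, l) ::ₘ (j, k) ::ₘ R) < B - sqSum ((i, k) ::ₘ (j, l) ::ₘ R) := by
    omega
  omega

lemma span_aux (m : ℕ) :
    ∀ (N : ℕ) (E : Multiset (Fin n × Fin n)), mu E < N →
    Multiset.card E = m → (∀ e ∈ E, e.1 < e.2) →
    bracketMonomial n E ∈ Submodule.span ℂ
      (Set.range fun D : RumerDiagram n m => bracketMonomial n D.1) := by
  intro N
  induction N with
  | zero => intro E h _ _; exact absurd h (Nat.not_lt_zero _)
  | succ N ih =>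
    intro E hmu hcard hinc
    by_cases hnc : ∀ e ∈ E, ∀ f ∈ E, ¬ Crosses e f
    · exact Submodule.subset_span ⟨⟨E, hcard, hinc, hnc⟩, rfl⟩
    · push_neg at hnc
      obtain ⟨e, heE, f, hfE, hcr⟩ := hnc
      have hef : f ≠ e := by
        rcases hcr with ⟨hlt, -, -⟩ | ⟨hlt, -, -⟩ <;>
          · intro hEq; rw [hEq] at hlt; exact lt_irrefl _ hlt
      have hfE' : f ∈ E.erase e := (Multiset.mem_erase_of_ne hef).2 hfE
      obtain ⟨R, hR⟩ : ∃ R, E = e ::ₘ f ::ₘ R :=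
        ⟨(E.erase e).erase f, by rw [Multiset.cons_erase hfE', Multiset.cons_erase heE]⟩
      have hmemR : ∀ g ∈ R, g ∈ E := fun g hg => by
        rw [hR]; exact Multiset.mem_cons_of_mem (Multiset.mem_cons_of_mem hg)
      have hcard2 : Multiset.card R + 2 = m := by
        rw [hR] at hcard; simpa using hcard
      rcases hcr with ⟨h1, h2, h3⟩ | ⟨h1, h2, h3⟩
      · -- e = (i,k), f = (j,l), i < j < k < l
        have hsplit : bracketMonomial n E =
            bracketMonomial n ((e.1, f.1) ::ₘ (e.2, f.2) ::ₘ R) +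
              bracketMonomial n ((e.1, f.2) ::ₘ (f.1, e.2) ::ₘ R) := by
          rw [hR]
          simp only [bracketMonomial_cons]
          rw [← mul_assoc, pluecker e.1 f.1 e.2 f.2]
          ring
        have hmuE : mu ((e.1, e.2) ::ₘ (f.1, f.2) ::ₘ R) = mu E := by
          rw [Prod.mk.eta, Prod.mk.eta, ← hR]
        have hm1 : mu ((e.1, f.1) ::ₘ (e.2, f.2) ::ₘ R) < N := by
          have := mu_lt₁ R h1 h2 h3
          omega
        have hm2 : mu ((e.1, f.2) ::ₘ (f.1, e.2) ::ₘ R) < N := by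
          have := mu_lt₂ R h1 h2 h3
          omega
        rw [hsplit]
        refine Submodule.add_mem _ (ih _ hm1 ?_ ?_) (ih _ hm2 ?_ ?_)
        · rw [Multiset.card_cons, Multiset.card_cons]; omega
        · intro g hg
          rcases Multiset.mem_cons.1 hg with rfl | hg'
          · exact h1
          · rcases Multiset.mem_cons.1 hg' with rfl | hg''
            · exact h3
            · exact hinc g (hmemR g hg'')
        · rw [Multiset.card_cons, Multiset.card_cons]; omega
        · intro g hg
          rcases Multiset.mem_cons.1 hg with rfl | hg'
          · exact lt_trans (lt_trans h1 h2) h3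
          · rcases Multiset.mem_cons.1 hg' with rfl | hg''
            · exact h2
            · exact hinc g (hmemR g hg'')
      · -- f = (i,k), e = (j,l), with f.1 < e.1 < f.2 < e.2
        have hsplit : bracketMonomial n E =
            bracketMonomial n ((f.1, e.1) ::ₘ (f.2, e.2) ::ₘ R) +
              bracketMonomial n ((f.1, e.2) ::ₘ (e.1, f.2) ::ₘ R) := by
          rw [hR]
          simp only [bracketMonomial_cons]
          rw [← mul_assoc, mul_comm (bracket n e.1 e.2) (bracket n f.1 f.2),
            pluecker f.1 e.1 f.2 e.2]
          ring
        have hmuE : mu ((f.1, f.2) ::ₘ (e.1, e.2) ::ₘ R) = mu E := by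
          rw [Prod.mk.eta, Prod.mk.eta, ← Multiset.cons_swap, ← hR]
        have hm1 : mu ((f.1, e.1) ::ₘ (f.2, e.2) ::ₘ R) < N := by
          have := mu_lt₁ R h1 h2 h3
          omega
        have hm2 : mu ((f.1, e.2) ::ₘ (e.1, f.2) ::ₘ R) < N := by
          have := mu_lt₂ R h1 h2 h3
          omega
        rw [hsplit]
        refine Submodule.add_mem _ (ih _ hm1 ?_ ?_) (ih _ hm2 ?_ ?_)
        · rw [Multiset.card_cons, Multiset.card_cons]; omega
        · intro g hg
          rcases Multiset.mem_cons.1 hg with rfl | hg'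
          · exact h1
          · rcases Multiset.mem_cons.1 hg' with rfl | hg''
            · exact h3
            · exact hinc g (hmemR g hg'')
        · rw [Multiset.card_cons, Multiset.card_cons]; omega
        · intro g hg
          rcases Multiset.mem_cons.1 hg with rfl | hg'
          · exact lt_trans (lt_trans h1 h2) h3
          · rcases Multiset.mem_cons.1 hg' with rfl | hg''
            · exact h2
            · exact hinc g (hmemR g hg'')

end Span

theorem rumer_bracket_monomials_linearIndependent_and_span
    (n m : ℕ) (hn : 2 ≤ n) :
    LinearIndependent ℂ (fun E : RumerDiagram n m => bracketMonomial n E.1) ∧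
      Submodule.span ℂ (Set.range fun E : RumerDiagram n m => bracketMonomial n E.1)
        = Submodule.span ℂ
            {g : MvPolynomial (Fin n × Fin 2) ℂ |
              ∃ E : Multiset (Fin n × Fin n), Multiset.card E = m ∧ (∀ e ∈ E, e.1 < e.2) ∧
                g = bracketMonomial n E} := by
  constructor
  · rw [linearIndependent_iff]
    intro l hl
    by_contra hne
    have hsupp : l.support.Nonempty := Finsupp.support_nonempty_iff.2 hne
    obtain ⟨E₀, hE₀, hmax⟩ := Finset.exists_max_image l.support (fun E => wt (DE E.1)) hsupp
    have hcoeff := congrArg (coeff (DE E₀.1)) hl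
    rw [Finsupp.linearCombination_apply, Finsupp.sum, coeff_sum, coeff_zero] at hcoeff
    rw [Finset.sum_eq_single E₀] at hcoeff
    · rw [coeff_smul, (good_bracketMonomial E₀.1 E₀.2.2.1).1, smul_eq_mul, mul_one] at hcoeff
      exact (Finsupp.mem_support_iff.1 hE₀) hcoeff
    · intro E hE hneE
      rw [coeff_smul]
      by_cases hc : coeff (DE E₀.1) (bracketMonomial n E.1) = 0
      · rw [hc, smul_zero]
      · exfalso
        obtain ⟨hle, heq⟩ := (good_bracketMonomial E.1 E.2.2.1).2 _ hc
        have h1 : wt (DE E.1) ≤ wt (DE E₀.1) := hmax E hE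
        have hDEeq : DE E₀.1 = DE E.1 := heq (le_antisymm hle h1)
        have hEq : E.1 = E₀.1 :=
          DE_injective (Multiset.card E.1) E.1 E₀.1 rfl E.2.2.1 E.2.2.2 E₀.2.2.1 E₀.2.2.2
            hDEeq.symm
        exact hneE (Subtype.ext hEq)
    · intro h; exact absurd hE₀ h
  · apply le_antisymm
    · apply Submodule.span_mono
      rintro g ⟨E, rfl⟩
      exact ⟨E.1, E.2.1, E.2.2.1, rfl⟩
    · rw [Submodule.span_le]
      rintro g ⟨E, hcard, hinc, rfl⟩
      exact span_aux m (mu E + 1) E (Nat.lt_succ_self _) hcard hinc
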